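/- (Conjugate symmetry of the MaxSINR beamformer for centro-symmetric arrays, general rank signal model.) Let A, B ∈ M_N(ℂ) be Hermitian and conjugate persymmetric, with A positive definite and B positive semidefinite. Let λ ∈ ℝ, and let w ∈ ℂ^N, w ≠ 0, satisfy (A⁻¹ B) w = λ w. Assume the eigenspace {v ∈ ℂ^N : (A⁻¹ B) v = λ v} is one-dimensional. Then there exists c ∈ ℂ with |c| = 1 such that J · conj(w) = c · w; i.e., the optimal weight vector is conjugate symmetric with respect to the array center, up to a unimodular scalar. -/

import Mathlib

open Matrix
open scoped ComplexOrder

/-- Conjugate symmetry of the MaxSINR beamformer for centro-symmetric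
arrays (general rank signal model). If `A, B` are Hermitian conjugate-persymmetric
matrices with `A` positive definite and `B` positive semidefinite, `w ≠ 0` is an
eigenvector of `A⁻¹ B` for the real eigenvalue `λ`, and the `λ`-eigenspace is
one-dimensional (spanned by `w`), then `J ⬝ conj(w) = c ⬝ w` for some unimodular `c`. -/
theorem maxsinr_weight_conjugate_symmetric
    (N : ℕ) (J A B : Matrix (Fin N) (Fin N) ℂ)
    (hJ : ∀ m n : Fin N, J m n = if (m : ℕ) + (n : ℕ) = N - 1 then 1 else 0)
    (hA : A.PosDef) (hB : B.PosSemidef)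
    (hAper : J * A.map (starRingEnd ℂ) * J = A)
    (hBper : J * B.map (starRingEnd ℂ) * J = B)
    (lam : ℝ) (w : Fin N → ℂ) (hw : w ≠ 0)
    (heig : (A⁻¹ * B) *ᵥ w = (lam : ℂ) • w)
    (hdim : ∀ v : Fin N → ℂ, (A⁻¹ * B) *ᵥ v = (lam : ℂ) • v → ∃ c : ℂ, v = c • w) :
    ∃ c : ℂ, ‖c‖ = 1 ∧ J *ᵥ (star w) = c • w := by
  classical
  set cj := starRingEnd ℂ
  have hJ' : ∀ m n : Fin N, J m n = if n = m.rev then 1 else 0 := by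
    intro m n
    rw [hJ]
    congr 1
    simp only [eq_iff_iff]
    constructor
    · intro h; apply Fin.ext; simp [Fin.rev]; omega
    · intro h; subst h; simp [Fin.rev]; omega
  have hJv : ∀ x : Fin N → ℂ, J *ᵥ x = fun m => x m.rev := by
    intro x; funext m
    simp only [mulVec, dotProduct, hJ']
    rw [Finset.sum_eq_single m.rev]
    · simp
    · intro b _ hb; simp [hb]
    · simp
  have hJJ : J * J = 1 := by
    ext m n
    simp only [Matrix.mul_apply, hJ', Matrix.one_apply]
    rw [Finset.sum_eq_single m.rev]
    · by_cases h : m = n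
      · subst h; simp
      · have h1 : ¬ (n = m.rev.rev) := by simpa [Fin.rev_rev] using fun h' => h h'.symm
        simp [h1, h, Ne.symm h]
    · intro b _ hb; simp [hb]
    · simp
  have hJJ' : ∀ X : Matrix (Fin N) (Fin N) ℂ, J * (J * X) = X := fun X => by
    rw [← Matrix.mul_assoc, hJJ, Matrix.one_mul]
  have hJinv : J⁻¹ = J := Matrix.inv_eq_left_inv hJJ
  have key : ∀ M M' : Matrix (Fin N) (Fin N) ℂ, J * M * J = M' → M = J * M' * J := by
    intro M M' h
    rw [← h]
    simp only [Matrix.mul_assoc, hJJ']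
    rw [hJJ, Matrix.mul_one]
  have hmapMulVec : ∀ (M : Matrix (Fin N) (Fin N) ℂ) (x : Fin N → ℂ),
      (M.map cj) *ᵥ (star x) = star (M *ᵥ x) := by
    intro M x
    funext m
    simp [mulVec, dotProduct, map_sum, Matrix.map_apply, Pi.star_apply]
    rfl
  have hAc : A.map cj = J * A * J := key _ _ hAper
  have hBc : B.map cj = J * B * J := key _ _ hBper
  have hAinvc : (A⁻¹).map cj = J * A⁻¹ * J := by
    have : Invertible A := hA.isUnit.invertible
    have hAu : A * A⁻¹ = 1 := Matrix.mul_inv_of_invertible A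
    have h1 : (A.map cj) * ((A⁻¹).map cj) = 1 := by
      rw [← Matrix.map_mul, hAu]
      ext i j; simp [Matrix.map_apply, Matrix.one_apply, apply_ite]
    have h2 : (A.map cj)⁻¹ = (A⁻¹).map cj := Matrix.inv_eq_right_inv h1
    rw [← h2, hAc, Matrix.mul_inv_rev, Matrix.mul_inv_rev, hJinv, Matrix.mul_assoc]
  have hcomm : (A⁻¹ * B) * J = J * (A⁻¹ * B).map cj := by
    rw [Matrix.map_mul, hAinvc, hBc]
    simp only [Matrix.mul_assoc, hJJ']
  set v : Fin N → ℂ := J *ᵥ (star w) with hv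
  have heigv : (A⁻¹ * B) *ᵥ v = (lam : ℂ) • v := by
    rw [hv, Matrix.mulVec_mulVec, hcomm, ← Matrix.mulVec_mulVec, hmapMulVec, heig]
    rw [star_smul, Matrix.mulVec_smul]
    simp [Complex.star_def, Complex.conj_ofReal]
  obtain ⟨c, hc⟩ := hdim v heigv
  have hJstarv : J *ᵥ star v = w := by
    funext m
    simp [hv, hJv, Fin.rev_rev]
  have hk : (starRingEnd ℂ c * c) • w = w := by
    have : J *ᵥ star v = (starRingEnd ℂ c * c) • w := by
      rw [hc, star_smul, Matrix.mulVec_smul, ← hv, hc, smul_smul]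
      rfl
    rw [← this, hJstarv]
  have hk1 : starRingEnd ℂ c * c = 1 := by
    have h0 : (starRingEnd ℂ c * c - 1) • w = 0 := by
      rw [sub_smul, one_smul, hk, sub_self]
    rcases smul_eq_zero.mp h0 with h | h
    · exact sub_eq_zero.mp h
    · exact absurd h hw
  refine ⟨c, ?_, hc⟩
  have hns : Complex.normSq c = 1 := by
    have := Complex.normSq_eq_conj_mul_self (z := c)
    rw [hk1] at this
    exact_mod_cast this
  have h2 : ‖c‖ ^ 2 = 1 := by rw [Complex.sq_norm, hns]
  nlinarith [norm_nonneg c]
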